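/- Let d, L ∈ ℕ, let a : ℤ^d → ℂ be 2L-periodic in each coordinate, and let M ∈ (0,∞) be such that the local variation satisfies lvar(a,k) ≤ M for every k ∈ ℤ^d. Then the total variation satisfies var(a) ≤ 4^d · M. -/

import Mathlib

/-!
From local variations to the total variation: if every local variation of a
periodic function on `ℤ^d` is at most `M`, then its total variation is at
most `4^d · M`.  Suprema over the (infinite) families of dyadic rectangles
and over the finitely many difference patterns are expressed pointwise.
-/

/-- real dyadic intervals -/
noncomputable def Dr (l : ℤ) : Set ℝ :=
  if 1 ≤ l then Set.Ico ((2:ℝ) ^ (l-1)) ((2:ℝ) ^ l)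
  else if l = 0 then Set.Ioo (-1) 1
  else Set.Ioc (-(2:ℝ) ^ (-l)) (-(2:ℝ) ^ (-l-1))

/-- lattice points of `D(l) ∩ I_L` -/
noncomputable def DzL (l : ℤ) (L : ℕ) : Finset ℤ :=
  @Finset.filter _ (fun ν => ((ν:ℝ) ∈ Dr l)) (Classical.decPred _)
    (Finset.Icc (-(L:ℤ) + 1) (L:ℤ))

/-- remove the largest element -/
def dropMax (s : Finset ℤ) : Finset ℤ := s.filter (fun ν => (ν : WithBot ℤ) ≠ s.max)

/-- mixed sum/sup aggregation: coordinate `0` is outermost; over coordinates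
with `α = true` we sum over the first family of domains, over coordinates with
`α = false` we take a supremum over the second family. -/
noncomputable def mixedAgg : (m : ℕ) → (Fin m → Bool) → (Fin m → Finset ℤ) →
    (Fin m → Finset ℤ) → ((Fin m → ℤ) → ℝ) → ℝ
  | 0, _, _, _, f => f Fin.elim0
  | m+1, α, sd, pd, f =>
    if α 0 then
      ∑ ν ∈ sd 0, mixedAgg m (fun i => α i.succ) (fun i => sd i.succ)
        (fun i => pd i.succ) (fun r => f (Fin.cons ν r))
    else
      sSup ((fun ν => mixedAgg m (fun i => α i.succ) (fun i => sd i.succ)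
        (fun i => pd i.succ) (fun r => f (Fin.cons ν r))) '' (pd 0 : Set ℤ))

/-- mixed difference `Δ_1^{α_1} ⋯ Δ_m^{α_m} a` -/
noncomputable def mixedDiff (m : ℕ) (α : Fin m → Bool)
    (a : (Fin m → ℤ) → ℂ) (x : Fin m → ℤ) : ℂ :=
  ∑ T ∈ (Finset.univ.filter fun i => α i).powerset,
    (-1:ℂ) ^ ((Finset.univ.filter fun i => α i).card - T.card) *
      a (x + fun i => if i ∈ T then 1 else 0)

/-- one term of the total variation -/
noncomputable def varExpr (m L : ℕ) (a : (Fin m → ℤ) → ℂ)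
    (k : Fin m → ℤ) (α : Fin m → Bool) : ℝ :=
  mixedAgg m α (fun j => DzL (k j) L) (fun j => DzL (k j) L)
    (fun ν => ‖mixedDiff m α a ν‖)

/-- one term of the local variation -/
noncomputable def lvarExpr (m L : ℕ) (a : (Fin m → ℤ) → ℂ)
    (k : Fin m → ℤ) (α : Fin m → Bool) : ℝ :=
  mixedAgg m α (fun j => dropMax (DzL (k j) L)) (fun j => DzL (k j) L)
    (fun ν => ‖mixedDiff m α a ν‖)


open Finset

section Aux

def semb (m : ℕ) : Fin m ↪ Fin (m+1) := ⟨Fin.succ, Fin.succ_injective m⟩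

lemma cons_add_cons {m : ℕ} (a b : ℤ) (f g : Fin m → ℤ) :
    (Fin.cons a f + Fin.cons b g : Fin (m+1) → ℤ) = Fin.cons (a+b) (f+g) := by
  funext i
  cases i using Fin.cases with
  | zero => simp
  | succ j => simp

lemma indicator_map {m : ℕ} (T : Finset (Fin m)) :
    (fun i : Fin (m+1) => if i ∈ T.map (semb m) then (1:ℤ) else 0)
      = Fin.cons 0 (fun j => if j ∈ T then (1:ℤ) else 0) := by
  funext i
  cases i using Fin.cases with
  | zero => simp [semb, Fin.succ_ne_zero]
  | succ j => simp [semb]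

lemma indicator_insert {m : ℕ} (T : Finset (Fin m)) :
    (fun i : Fin (m+1) => if i ∈ insert 0 (T.map (semb m)) then (1:ℤ) else 0)
      = Fin.cons 1 (fun j => if j ∈ T then (1:ℤ) else 0) := by
  funext i
  cases i using Fin.cases with
  | zero => simp
  | succ j => simp [semb, Fin.succ_ne_zero]

lemma filter_univ_succ_false {m : ℕ} (α : Fin (m+1) → Bool) (h : α 0 = false) :
    (Finset.univ.filter fun i => α i) =
      (Finset.univ.filter fun j : Fin m => α j.succ).map (semb m) := by
  ext i
  cases i using Fin.cases with
  | zero => simp [h, semb, Fin.succ_ne_zero]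
  | succ j => simp [semb]

lemma filter_univ_succ_true {m : ℕ} (α : Fin (m+1) → Bool) (h : α 0 = true) :
    (Finset.univ.filter fun i => α i) =
      insert 0 ((Finset.univ.filter fun j : Fin m => α j.succ).map (semb m)) := by
  ext i
  cases i using Fin.cases with
  | zero => simp [h]
  | succ j => simp [semb, Fin.succ_ne_zero]

lemma mixedDiff_cons_false {m : ℕ} (α : Fin (m+1) → Bool) (h : α 0 = false)
    (a : (Fin (m+1) → ℤ) → ℂ) (ν : ℤ) (r : Fin m → ℤ) :
    mixedDiff (m+1) α a (Fin.cons ν r)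
      = mixedDiff m (fun j => α j.succ) (fun s => a (Fin.cons ν s)) r := by
  unfold mixedDiff
  rw [filter_univ_succ_false α h]
  refine (Finset.sum_bij (fun (T : Finset (Fin m)) _ => T.map (semb m)) ?_ ?_ ?_ ?_).symm
  · intro T hT
    exact Finset.mem_powerset.2 (Finset.map_subset_map.2 (Finset.mem_powerset.1 hT))
  · intro T1 _ T2 _ hmap
    exact Finset.map_injective _ hmap
  · intro T hT
    obtain ⟨u, hu, rfl⟩ := Finset.subset_map_iff.1 (Finset.mem_powerset.1 hT)
    exact ⟨u, Finset.mem_powerset.2 hu, rfl⟩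
  · intro T hT
    rw [Finset.card_map, Finset.card_map, indicator_map, cons_add_cons]
    norm_num

lemma mixedDiff_sub {m : ℕ} (α : Fin m → Bool) (F G : (Fin m → ℤ) → ℂ) (y : Fin m → ℤ) :
    mixedDiff m α (fun x => F x - G x) y = mixedDiff m α F y - mixedDiff m α G y := by
  unfold mixedDiff
  rw [← Finset.sum_sub_distrib]
  exact Finset.sum_congr rfl (fun T _ => by ring)


lemma sum_powerset_map {m : ℕ} (s : Finset (Fin m)) (F : Finset (Fin (m+1)) → ℂ) :
    ∑ T ∈ (s.map (semb m)).powerset, F T = ∑ T ∈ s.powerset, F (T.map (semb m)) := by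
  refine (Finset.sum_bij (fun (T : Finset (Fin m)) _ => T.map (semb m)) ?_ ?_ ?_ ?_).symm
  · intro T hT
    exact Finset.mem_powerset.2 (Finset.map_subset_map.2 (Finset.mem_powerset.1 hT))
  · intro T1 _ T2 _ hmap
    exact Finset.map_injective _ hmap
  · intro T hT
    obtain ⟨u, hu, rfl⟩ := Finset.subset_map_iff.1 (Finset.mem_powerset.1 hT)
    exact ⟨u, Finset.mem_powerset.2 hu, rfl⟩
  · intro T hT
    rfl

lemma mixedDiff_cons_true {m : ℕ} (α : Fin (m+1) → Bool) (h : α 0 = true)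
    (a : (Fin (m+1) → ℤ) → ℂ) (ν : ℤ) (r : Fin m → ℤ) :
    mixedDiff (m+1) α a (Fin.cons ν r)
      = mixedDiff m (fun j => α j.succ) (fun s => a (Fin.cons (ν+1) s)) r
        - mixedDiff m (fun j => α j.succ) (fun s => a (Fin.cons ν s)) r := by
  set s : Finset (Fin m) := Finset.univ.filter fun j : Fin m => α j.succ with hs
  have h0 : (0 : Fin (m+1)) ∉ s.map (semb m) := by
    simp [semb, Fin.succ_ne_zero]
  have hdisj : Disjoint (s.map (semb m)).powerset
      ((s.map (semb m)).powerset.image (insert 0)) := by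
    rw [Finset.disjoint_left]
    intro T hT hT'
    obtain ⟨T', _, rfl⟩ := Finset.mem_image.1 hT'
    exact h0 (Finset.mem_powerset.1 hT (Finset.mem_insert_self 0 T'))
  unfold mixedDiff
  rw [filter_univ_succ_true α h, ← hs, Finset.powerset_insert, Finset.sum_union hdisj,
    Finset.card_insert_of_notMem h0]
  have hinj : ∀ T1 ∈ (s.map (semb m)).powerset, ∀ T2 ∈ (s.map (semb m)).powerset,
      insert 0 T1 = insert 0 T2 → T1 = T2 := by
    intro T1 h1 T2 h2 he
    have n1 : (0 : Fin (m+1)) ∉ T1 := fun c => h0 (Finset.mem_powerset.1 h1 c)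
    have n2 : (0 : Fin (m+1)) ∉ T2 := fun c => h0 (Finset.mem_powerset.1 h2 c)
    rw [← Finset.erase_insert n1, ← Finset.erase_insert n2, he]
  rw [Finset.sum_image hinj, sum_powerset_map, sum_powerset_map]
  have e1 : ∀ T ∈ s.powerset,
      (-1:ℂ) ^ ((s.map (semb m)).card + 1 - (T.map (semb m)).card) *
        a (Fin.cons ν r + fun i => if i ∈ T.map (semb m) then 1 else 0)
      = -((-1:ℂ) ^ (s.card - T.card) * a (Fin.cons ν (r + fun j => if j ∈ T then 1 else 0))) := by
    intro T hT
    have hle : T.card ≤ s.card := Finset.card_le_card (Finset.mem_powerset.1 hT)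
    rw [Finset.card_map, Finset.card_map, indicator_map, cons_add_cons,
      show s.card + 1 - T.card = (s.card - T.card) + 1 by omega, pow_succ]
    norm_num
  have e2 : ∀ T ∈ s.powerset,
      (-1:ℂ) ^ ((s.map (semb m)).card + 1 - (insert 0 (T.map (semb m))).card) *
        a (Fin.cons ν r + fun i => if i ∈ insert 0 (T.map (semb m)) then 1 else 0)
      = (-1:ℂ) ^ (s.card - T.card) * a (Fin.cons (ν+1) (r + fun j => if j ∈ T then 1 else 0)) := by
    intro T hT
    have n1 : (0 : Fin (m+1)) ∉ T.map (semb m) := by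
      intro c
      exact h0 (Finset.map_subset_map.2 (Finset.mem_powerset.1 hT) c)
    rw [Finset.card_insert_of_notMem n1, Finset.card_map, Finset.card_map,
      indicator_insert, cons_add_cons, Nat.succ_sub_succ]
  rw [Finset.sum_congr rfl e1, Finset.sum_congr rfl e2, Finset.sum_neg_distrib]
  ring

lemma mixedAgg_nonneg (m : ℕ) : ∀ (α : Fin m → Bool) (sd pd : Fin m → Finset ℤ)
    (f : (Fin m → ℤ) → ℝ), (∀ x, 0 ≤ f x) → 0 ≤ mixedAgg m α sd pd f := by
  induction m with
  | zero => intro α sd pd f hf; exact hf _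
  | succ m ih =>
    intro α sd pd f hf
    by_cases hα : α 0 = true
    · simp only [mixedAgg, hα, if_true]
      exact Finset.sum_nonneg fun ν _ => ih _ _ _ _ (fun r => hf _)
    · simp only [mixedAgg, hα, if_false, Bool.not_eq_true] at *
      simp only [mixedAgg, hα, Bool.false_eq_true, if_false]
      refine Real.sSup_nonneg ?_
      rintro x ⟨ν, _, rfl⟩
      exact ih _ _ _ _ (fun r => hf _)

lemma mixedAgg_le_add (m : ℕ) : ∀ (α : Fin m → Bool) (sd pd : Fin m → Finset ℤ)
    (f g h : (Fin m → ℤ) → ℝ), (∀ x, f x ≤ g x + h x) → (∀ x, 0 ≤ g x) → (∀ x, 0 ≤ h x) →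
    mixedAgg m α sd pd f ≤ mixedAgg m α sd pd g + mixedAgg m α sd pd h := by
  induction m with
  | zero => intro α sd pd f g h hf hg hh; exact hf _
  | succ m ih =>
    intro α sd pd f g h hf hg hh
    by_cases hα : α 0 = true
    · simp only [mixedAgg, hα, if_true]
      rw [← Finset.sum_add_distrib]
      exact Finset.sum_le_sum fun ν _ =>
        ih _ _ _ _ _ _ (fun r => hf _) (fun r => hg _) (fun r => hh _)
    · replace hα : α 0 = false := by simpa using hα
      simp only [mixedAgg, hα, Bool.false_eq_true, if_false]
      have hbg : BddAbove ((fun ν => mixedAgg m (fun i => α i.succ) (fun i => sd i.succ)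
          (fun i => pd i.succ) (fun r => g (Fin.cons ν r))) '' (pd 0 : Set ℤ)) :=
        ((pd 0).finite_toSet.image _).bddAbove
      have hbh : BddAbove ((fun ν => mixedAgg m (fun i => α i.succ) (fun i => sd i.succ)
          (fun i => pd i.succ) (fun r => h (Fin.cons ν r))) '' (pd 0 : Set ℤ)) :=
        ((pd 0).finite_toSet.image _).bddAbove
      have hgn : 0 ≤ sSup ((fun ν => mixedAgg m (fun i => α i.succ) (fun i => sd i.succ)
          (fun i => pd i.succ) (fun r => g (Fin.cons ν r))) '' (pd 0 : Set ℤ)) := by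
        refine Real.sSup_nonneg ?_
        rintro x ⟨ν, _, rfl⟩
        exact mixedAgg_nonneg _ _ _ _ _ (fun r => hg _)
      have hhn : 0 ≤ sSup ((fun ν => mixedAgg m (fun i => α i.succ) (fun i => sd i.succ)
          (fun i => pd i.succ) (fun r => h (Fin.cons ν r))) '' (pd 0 : Set ℤ)) := by
        refine Real.sSup_nonneg ?_
        rintro x ⟨ν, _, rfl⟩
        exact mixedAgg_nonneg _ _ _ _ _ (fun r => hh _)
      refine Real.sSup_le ?_ (add_nonneg hgn hhn)
      rintro x ⟨ν, hν, rfl⟩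
      calc mixedAgg m (fun i => α i.succ) (fun i => sd i.succ) (fun i => pd i.succ)
            (fun r => f (Fin.cons ν r))
          ≤ mixedAgg m (fun i => α i.succ) (fun i => sd i.succ) (fun i => pd i.succ)
            (fun r => g (Fin.cons ν r)) + mixedAgg m (fun i => α i.succ) (fun i => sd i.succ)
            (fun i => pd i.succ) (fun r => h (Fin.cons ν r)) :=
            ih _ _ _ _ _ _ (fun r => hf _) (fun r => hg _) (fun r => hh _)
        _ ≤ _ := add_le_add (le_csSup hbg ⟨ν, hν, rfl⟩) (le_csSup hbh ⟨ν, hν, rfl⟩)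

lemma exists_dyad (n : ℤ) : ∃ l : ℤ, (n : ℝ) ∈ Dr l := by
  rcases lt_trichotomy n 0 with hn | hn | hn
  · set e := Nat.log 2 (-n).toNat with he
    refine ⟨-((e:ℤ) + 1), ?_⟩
    have hq : ((-n).toNat : ℤ) = -n := by omega
    have hA : ((2:ℤ) ^ e) ≤ -n := by
      rw [← hq]; exact_mod_cast Nat.pow_log_le_self 2 (by omega)
    have hB : -n < (2:ℤ) ^ (e + 1) := by
      rw [← hq]; exact_mod_cast Nat.lt_pow_succ_log_self one_lt_two _
    have hneg : ¬ (1 ≤ -((e:ℤ) + 1)) := by omega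
    have hzero : ¬ (-((e:ℤ) + 1) = 0) := by omega
    simp only [Dr, if_neg hneg, if_neg hzero, Set.mem_Ioc, neg_neg]
    constructor
    · rw [show ((e:ℤ) + 1) = ((e + 1 : ℕ) : ℤ) by push_cast; ring, zpow_natCast]
      have : -(2:ℤ) ^ (e+1) < n := by linarith
      exact_mod_cast this
    · rw [show ((e:ℤ) + 1 - 1) = ((e : ℕ) : ℤ) by ring, zpow_natCast]
      have : n ≤ -(2:ℤ) ^ e := by linarith
      exact_mod_cast this
  · exact ⟨0, by rw [hn]; norm_num [Dr]⟩
  · set e := Nat.log 2 n.toNat with he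
    refine ⟨(e:ℤ) + 1, ?_⟩
    have hq : (n.toNat : ℤ) = n := by omega
    have hA : ((2:ℤ) ^ e) ≤ n := by
      rw [← hq]; exact_mod_cast Nat.pow_log_le_self 2 (by omega)
    have hB : n < (2:ℤ) ^ (e + 1) := by
      rw [← hq]; exact_mod_cast Nat.lt_pow_succ_log_self one_lt_two _
    have hpos : 1 ≤ (e:ℤ) + 1 := by omega
    simp only [Dr, if_pos hpos, Set.mem_Ico, add_sub_cancel_right]
    constructor
    · rw [show ((e:ℤ)) = ((e : ℕ) : ℤ) by rfl, zpow_natCast]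
      exact_mod_cast hA
    · rw [show ((e:ℤ) + 1) = ((e + 1 : ℕ) : ℤ) by push_cast; ring, zpow_natCast]
      exact_mod_cast hB


noncomputable def dyadIdx (n : ℤ) : ℤ := Classical.choose (exists_dyad n)

lemma dyadIdx_spec (n : ℤ) : (n : ℝ) ∈ Dr (dyadIdx n) := Classical.choose_spec (exists_dyad n)

def wrapL (L : ℕ) (n : ℤ) : ℤ := if (L:ℤ) < n then n - 2*L else n

noncomputable def nk (L : ℕ) (l : ℤ) : ℤ := dyadIdx (wrapL L (WithBot.unbotD 0 (DzL l L).max + 1))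

def Af {m : ℕ} (α : Fin m → Bool) (γ : Fin m → Fin 3) : Fin m → Bool :=
  fun j => α j && decide (γ j = 0)

noncomputable def Kf (L : ℕ) {m : ℕ} (k : Fin m → ℤ) (α : Fin m → Bool)
    (γ : Fin m → Fin 3) : Fin m → ℤ :=
  fun j => if α j = true ∧ γ j = 2 then nk L (k j) else k j

lemma mem_DzL {l : ℤ} {L : ℕ} {ν : ℤ} :
    ν ∈ DzL l L ↔ (-(L:ℤ) + 1 ≤ ν ∧ ν ≤ L) ∧ (ν:ℝ) ∈ Dr l := by
  simp [DzL, Finset.mem_filter, Finset.mem_Icc]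

lemma mem_DzL_dyadIdx {L : ℕ} {μ : ℤ} (h1 : -(L:ℤ) + 1 ≤ μ) (h2 : μ ≤ L) :
    μ ∈ DzL (dyadIdx μ) L :=
  mem_DzL.2 ⟨⟨h1, h2⟩, dyadIdx_spec μ⟩

lemma dropMax_eq_erase (s : Finset ℤ) (hs : s.Nonempty) :
    dropMax s = s.erase (s.max' hs) := by
  ext ν
  rw [dropMax, Finset.mem_filter, Finset.mem_erase, ← Finset.coe_max' hs, and_comm]
  simp [WithBot.coe_inj]

/-- unfolding lemmas -/
lemma varExpr_succ_true {m L : ℕ} (a : (Fin (m+1) → ℤ) → ℂ) (k : Fin (m+1) → ℤ)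
    (α : Fin (m+1) → Bool) (hα : α 0 = true) :
    varExpr (m+1) L a k α = ∑ ν ∈ DzL (k 0) L,
      varExpr m L (fun s => a (Fin.cons (ν+1) s) - a (Fin.cons ν s))
        (fun j => k j.succ) (fun j => α j.succ) := by
  unfold varExpr
  simp only [mixedAgg, hα, if_true]
  refine Finset.sum_congr rfl fun ν _ => ?_
  congr 1
  funext r
  rw [mixedDiff_cons_true α hα a ν r, mixedDiff_sub]

lemma varExpr_succ_false {m L : ℕ} (a : (Fin (m+1) → ℤ) → ℂ) (k : Fin (m+1) → ℤ)
    (α : Fin (m+1) → Bool) (hα : α 0 = false) :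
    varExpr (m+1) L a k α = sSup ((fun ν => varExpr m L (fun s => a (Fin.cons ν s))
      (fun j => k j.succ) (fun j => α j.succ)) '' ((DzL (k 0) L : Finset ℤ) : Set ℤ)) := by
  unfold varExpr
  simp only [mixedAgg, hα, Bool.false_eq_true, if_false]
  refine congrArg sSup (congrArg (fun g : ℤ → ℝ => g '' ((DzL (k 0) L : Finset ℤ) : Set ℤ)) ?_)
  funext ν
  congr 1
  funext r
  rw [mixedDiff_cons_false α hα a ν r]

lemma lvarExpr_succ_true {m L : ℕ} (a : (Fin (m+1) → ℤ) → ℂ) (k : Fin (m+1) → ℤ)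
    (α : Fin (m+1) → Bool) (hα : α 0 = true) :
    lvarExpr (m+1) L a k α = ∑ ν ∈ dropMax (DzL (k 0) L),
      lvarExpr m L (fun s => a (Fin.cons (ν+1) s) - a (Fin.cons ν s))
        (fun j => k j.succ) (fun j => α j.succ) := by
  unfold lvarExpr
  simp only [mixedAgg, hα, if_true]
  refine Finset.sum_congr rfl fun ν _ => ?_
  congr 1
  funext r
  rw [mixedDiff_cons_true α hα a ν r, mixedDiff_sub]

lemma lvarExpr_succ_false {m L : ℕ} (a : (Fin (m+1) → ℤ) → ℂ) (k : Fin (m+1) → ℤ)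
    (α : Fin (m+1) → Bool) (hα : α 0 = false) :
    lvarExpr (m+1) L a k α = sSup ((fun ν => lvarExpr m L (fun s => a (Fin.cons ν s))
      (fun j => k j.succ) (fun j => α j.succ)) '' ((DzL (k 0) L : Finset ℤ) : Set ℤ)) := by
  unfold lvarExpr
  simp only [mixedAgg, hα, Bool.false_eq_true, if_false]
  refine congrArg sSup (congrArg (fun g : ℤ → ℝ => g '' ((DzL (k 0) L : Finset ℤ) : Set ℤ)) ?_)
  funext ν
  congr 1
  funext r
  rw [mixedDiff_cons_false α hα a ν r]

lemma lvarExpr_nonneg (m L : ℕ) (a : (Fin m → ℤ) → ℂ) (k : Fin m → ℤ) (α : Fin m → Bool) :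
    0 ≤ lvarExpr m L a k α :=
  mixedAgg_nonneg m α _ _ _ (fun x => norm_nonneg _)

lemma cons_single_succ {m : ℕ} (i : Fin m) (ν : ℤ) (r : Fin m → ℤ) (n : ℕ) :
    (Fin.cons ν (r + n • Pi.single i 1) : Fin (m+1) → ℤ)
      = Fin.cons ν r + n • Pi.single i.succ 1 := by
  funext j
  cases j using Fin.cases with
  | zero =>
    have : (Pi.single i.succ 1 : Fin (m+1) → ℤ) 0 = 0 :=
      Pi.single_eq_of_ne (Ne.symm (Fin.succ_ne_zero i)) 1
    simp [this]
  | succ j =>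
    have : (Pi.single i.succ 1 : Fin (m+1) → ℤ) j.succ = (Pi.single i 1 : Fin m → ℤ) j := by
      simp [Pi.single_apply, Fin.succ_inj]
    simp [this]

lemma per_slice {m L : ℕ} {a : (Fin (m+1) → ℤ) → ℂ}
    (hper : ∀ (x : Fin (m+1) → ℤ) (i : Fin (m+1)), a (x + (2*L) • Pi.single i 1) = a x)
    (ν : ℤ) (x : Fin m → ℤ) (i : Fin m) :
    a (Fin.cons ν (x + (2*L) • Pi.single i 1)) = a (Fin.cons ν x) := by
  rw [cons_single_succ]
  exact hper _ i.succ

lemma slice_shift {m L : ℕ} {a : (Fin (m+1) → ℤ) → ℂ}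
    (hper : ∀ (x : Fin (m+1) → ℤ) (i : Fin (m+1)), a (x + (2*L) • Pi.single i 1) = a x)
    (ν : ℤ) (s : Fin m → ℤ) :
    a (Fin.cons ν s) = a (Fin.cons (ν - 2*L) s) := by
  have key : (Fin.cons ν s : Fin (m+1) → ℤ)
      = Fin.cons (ν - 2*L) s + (2*L) • Pi.single (0 : Fin (m+1)) 1 := by
    funext j
    cases j using Fin.cases with
    | zero =>
      have h1 : (Pi.single (0 : Fin (m+1)) 1 : Fin (m+1) → ℤ) 0 = 1 := Pi.single_eq_same _ _
      simp only [Fin.cons_zero, Pi.add_apply, Pi.smul_apply, h1, smul_eq_mul, mul_one]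
      push_cast
      ring
    | succ j =>
      have : (Pi.single (0 : Fin (m+1)) 1 : Fin (m+1) → ℤ) j.succ = 0 :=
        Pi.single_eq_of_ne (Fin.succ_ne_zero j) 1
      simp [this]
  rw [key, hper _ 0]

/-- tail identities -/
lemma Af_tail {m : ℕ} (α : Fin (m+1) → Bool) (c : Fin 3) (γ' : Fin m → Fin 3) :
    (fun j : Fin m => Af α (Fin.cons c γ') j.succ) = Af (fun j => α j.succ) γ' := by
  funext j; simp [Af]

lemma Kf_tail {m L : ℕ} (k : Fin (m+1) → ℤ) (α : Fin (m+1) → Bool) (c : Fin 3)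
    (γ' : Fin m → Fin 3) :
    (fun j : Fin m => Kf L k α (Fin.cons c γ') j.succ)
      = Kf L (fun j => k j.succ) (fun j => α j.succ) γ' := by
  funext j; simp [Kf]

/-- Main induction -/
theorem keyH (L : ℕ) (hL : 1 ≤ L) (m : ℕ) : ∀ (a : (Fin m → ℤ) → ℂ),
    (∀ (x : Fin m → ℤ) (i : Fin m), a (x + (2*L) • Pi.single i 1) = a x) →
    ∀ (k : Fin m → ℤ) (α : Fin m → Bool),
    varExpr m L a k α ≤ ∑ γ : Fin m → Fin 3, lvarExpr m L a (Kf L k α γ) (Af α γ) := by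
  induction m with
  | zero =>
    intro a hper k α
    have h1 : varExpr 0 L a k α = ‖mixedDiff 0 α a Fin.elim0‖ := rfl
    have h2 : ∀ (k' : Fin 0 → ℤ) (α' : Fin 0 → Bool),
        lvarExpr 0 L a k' α' = ‖mixedDiff 0 α' a Fin.elim0‖ := fun _ _ => rfl
    have h3 : ∀ (α' : Fin 0 → Bool), mixedDiff 0 α' a Fin.elim0 = mixedDiff 0 α a Fin.elim0 := by
      intro α'
      congr 1
      exact Subsingleton.elim _ _
    rw [h1]
    calc ‖mixedDiff 0 α a Fin.elim0‖
        = lvarExpr 0 L a (Kf L k α default) (Af α default) := by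
          rw [h2]
          exact congrArg norm (h3 _).symm
      _ ≤ ∑ γ : Fin 0 → Fin 3, lvarExpr 0 L a (Kf L k α γ) (Af α γ) :=
          Finset.single_le_sum (f := fun γ => lvarExpr 0 L a (Kf L k α γ) (Af α γ))
            (fun γ _ => lvarExpr_nonneg _ _ _ _ _) (Finset.mem_univ _)
  | succ m ih =>
    intro a hper k α
    -- split RHS
    have hsplit : ∑ γ : Fin (m+1) → Fin 3, lvarExpr (m+1) L a (Kf L k α γ) (Af α γ)
        = ∑ c : Fin 3, ∑ γ' : Fin m → Fin 3,
            lvarExpr (m+1) L a (Kf L k α (Fin.cons c γ')) (Af α (Fin.cons c γ')) := by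
      rw [(Fintype.sum_equiv (Fin.consEquiv fun _ => Fin 3) _ _ (fun p => rfl) :
        ∑ p : Fin 3 × (Fin m → Fin 3),
          lvarExpr (m+1) L a (Kf L k α (Fin.cons p.1 p.2)) (Af α (Fin.cons p.1 p.2)) = _).symm,
        Fintype.sum_prod_type]
    rw [hsplit, Fin.sum_univ_three]
    have hRHS0 : ∀ c : Fin 3, 0 ≤ ∑ γ' : Fin m → Fin 3,
        lvarExpr (m+1) L a (Kf L k α (Fin.cons c γ')) (Af α (Fin.cons c γ')) :=
      fun c => Finset.sum_nonneg fun γ' _ => lvarExpr_nonneg _ _ _ _ _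
    have hs_per : ∀ ν : ℤ, ∀ (x : Fin m → ℤ) (i : Fin m),
        (fun s => a (Fin.cons ν s)) (x + (2*L) • Pi.single i 1)
          = (fun s => a (Fin.cons ν s)) x := fun ν x i => per_slice hper ν x i
    by_cases hα : α 0 = true
    · -- summation coordinate
      rw [varExpr_succ_true a k α hα]
      by_cases hSne : (DzL (k 0) L).Nonempty
      · have hmxS : (DzL (k 0) L).max' hSne ∈ DzL (k 0) L := Finset.max'_mem _ hSne
        have hmxIcc : -(L:ℤ) + 1 ≤ (DzL (k 0) L).max' hSne ∧ (DzL (k 0) L).max' hSne ≤ L :=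
          (mem_DzL.1 hmxS).1
        have hdrop : dropMax (DzL (k 0) L) = (DzL (k 0) L).erase ((DzL (k 0) L).max' hSne) :=
          dropMax_eq_erase _ hSne
        rw [← Finset.sum_erase_add (DzL (k 0) L) _ hmxS]
        have hb_per : ∀ ν : ℤ, ∀ (x : Fin m → ℤ) (i : Fin m),
            (fun s => a (Fin.cons (ν+1) s) - a (Fin.cons ν s)) (x + (2*L) • Pi.single i 1)
              = (fun s => a (Fin.cons (ν+1) s) - a (Fin.cons ν s)) x := by
          intro ν x i
          show a (Fin.cons (ν+1) (x + (2*L) • Pi.single i 1))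
              - a (Fin.cons ν (x + (2*L) • Pi.single i 1)) = _
          rw [per_slice hper, per_slice hper]
        -- R0 bound
        have hR0 : ∑ ν ∈ (DzL (k 0) L).erase ((DzL (k 0) L).max' hSne), varExpr m L
              (fun s => a (Fin.cons (ν+1) s) - a (Fin.cons ν s))
              (fun j => k j.succ) (fun j => α j.succ)
            ≤ ∑ γ' : Fin m → Fin 3,
              lvarExpr (m+1) L a (Kf L k α (Fin.cons 0 γ')) (Af α (Fin.cons 0 γ')) := by
          have hunf : ∀ γ' : Fin m → Fin 3,
              lvarExpr (m+1) L a (Kf L k α (Fin.cons 0 γ')) (Af α (Fin.cons 0 γ'))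
              = ∑ ν ∈ (DzL (k 0) L).erase ((DzL (k 0) L).max' hSne), lvarExpr m L
                  (fun s => a (Fin.cons (ν+1) s) - a (Fin.cons ν s))
                  (Kf L (fun j => k j.succ) (fun j => α j.succ) γ')
                  (Af (fun j => α j.succ) γ') := by
            intro γ'
            have hAf0 : (Af α (Fin.cons (0 : Fin 3) γ')) 0 = true := by simp [Af, hα]
            have hKf0 : (Kf L k α (Fin.cons (0 : Fin 3) γ')) 0 = k 0 := by simp [Kf]
            rw [lvarExpr_succ_true a _ _ hAf0, hKf0, Af_tail, Kf_tail, hdrop]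
          rw [Finset.sum_congr rfl (fun γ' _ => hunf γ'), Finset.sum_comm]
          exact Finset.sum_le_sum fun ν _ => ih _ (hb_per ν) _ _
        -- bound for the max term
        have hmax0 : WithBot.unbotD 0 (DzL (k 0) L).max = (DzL (k 0) L).max' hSne := by
          rw [← Finset.coe_max' hSne]
          rfl
        have hnk : nk L (k 0) = dyadIdx (wrapL L ((DzL (k 0) L).max' hSne + 1)) := by
          unfold nk
          rw [hmax0]
        have hμIcc : -(L:ℤ) + 1 ≤ wrapL L ((DzL (k 0) L).max' hSne + 1)
            ∧ wrapL L ((DzL (k 0) L).max' hSne + 1) ≤ L := by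
          unfold wrapL
          split <;> omega
        have hμmem : wrapL L ((DzL (k 0) L).max' hSne + 1) ∈ DzL (nk L (k 0)) L := by
          rw [hnk]
          exact mem_DzL_dyadIdx hμIcc.1 hμIcc.2
        have hslice2 : (fun s => a (Fin.cons ((DzL (k 0) L).max' hSne + 1) s))
            = fun s => a (Fin.cons (wrapL L ((DzL (k 0) L).max' hSne + 1)) s) := by
          unfold wrapL
          split
          · funext s
            exact slice_shift hper _ s
          · rfl
        have habs : ∀ r : Fin m → ℤ,
            ‖mixedDiff m (fun j => α j.succ)
              (fun s => a (Fin.cons ((DzL (k 0) L).max' hSne + 1) s)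
                - a (Fin.cons ((DzL (k 0) L).max' hSne) s)) r‖
            ≤ ‖mixedDiff m (fun j => α j.succ)
                (fun s => a (Fin.cons ((DzL (k 0) L).max' hSne + 1) s)) r‖
              + ‖mixedDiff m (fun j => α j.succ)
                (fun s => a (Fin.cons ((DzL (k 0) L).max' hSne) s)) r‖ := by
          intro r
          rw [mixedDiff_sub]
          simpa using norm_sub_le
            (mixedDiff m (fun j => α j.succ)
              (fun s => a (Fin.cons ((DzL (k 0) L).max' hSne + 1) s)) r)
            (mixedDiff m (fun j => α j.succ)
              (fun s => a (Fin.cons ((DzL (k 0) L).max' hSne) s)) r)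
        have hsplit2 : varExpr m L
              (fun s => a (Fin.cons ((DzL (k 0) L).max' hSne + 1) s)
                - a (Fin.cons ((DzL (k 0) L).max' hSne) s))
              (fun j => k j.succ) (fun j => α j.succ)
            ≤ varExpr m L (fun s => a (Fin.cons ((DzL (k 0) L).max' hSne + 1) s))
                (fun j => k j.succ) (fun j => α j.succ)
              + varExpr m L (fun s => a (Fin.cons ((DzL (k 0) L).max' hSne) s))
                (fun j => k j.succ) (fun j => α j.succ) := by
          unfold varExpr
          exact mixedAgg_le_add m _ _ _ _ _ _ habs
            (fun x => norm_nonneg _) (fun x => norm_nonneg _)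
        have hR1 : varExpr m L (fun s => a (Fin.cons ((DzL (k 0) L).max' hSne) s))
              (fun j => k j.succ) (fun j => α j.succ)
            ≤ ∑ γ' : Fin m → Fin 3,
              lvarExpr (m+1) L a (Kf L k α (Fin.cons 1 γ')) (Af α (Fin.cons 1 γ')) := by
          refine le_trans (ih _ (hs_per _) _ _) (Finset.sum_le_sum fun γ' _ => ?_)
          have hAf0 : (Af α (Fin.cons (1 : Fin 3) γ')) 0 = false := by simp [Af]
          have hKf0 : (Kf L k α (Fin.cons (1 : Fin 3) γ')) 0 = k 0 := by simp [Kf]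
          rw [lvarExpr_succ_false a _ _ hAf0, hKf0, Af_tail, Kf_tail]
          exact le_csSup (((DzL (k 0) L).finite_toSet.image _).bddAbove)
            ⟨_, by exact_mod_cast hmxS, rfl⟩
        have hR2 : varExpr m L (fun s => a (Fin.cons ((DzL (k 0) L).max' hSne + 1) s))
              (fun j => k j.succ) (fun j => α j.succ)
            ≤ ∑ γ' : Fin m → Fin 3,
              lvarExpr (m+1) L a (Kf L k α (Fin.cons 2 γ')) (Af α (Fin.cons 2 γ')) := by
          rw [hslice2]
          refine le_trans (ih _ (hs_per _) _ _) (Finset.sum_le_sum fun γ' _ => ?_)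
          have hAf0 : (Af α (Fin.cons (2 : Fin 3) γ')) 0 = false := by simp [Af]
          have hKf0 : (Kf L k α (Fin.cons (2 : Fin 3) γ')) 0 = nk L (k 0) := by
            simp [Kf, hα]
          rw [lvarExpr_succ_false a _ _ hAf0, hKf0, Af_tail, Kf_tail]
          exact le_csSup (((DzL (nk L (k 0)) L).finite_toSet.image _).bddAbove)
            ⟨_, by exact_mod_cast hμmem, rfl⟩
        have hVmx := le_trans hsplit2 (add_le_add hR2 hR1)
        linarith [hR0, hVmx]
      · -- empty summation set
        have hSe : DzL (k 0) L = ∅ := Finset.not_nonempty_iff_eq_empty.1 hSne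
        rw [hSe, Finset.sum_empty]
        linarith [hRHS0 0, hRHS0 1, hRHS0 2]
    · -- supremum coordinate
      replace hα : α 0 = false := by simpa using hα
      rw [varExpr_succ_false a k α hα]
      refine Real.sSup_le ?_ (by linarith [hRHS0 0, hRHS0 1, hRHS0 2])
      rintro x ⟨ν, hν, rfl⟩
      have hν' : ν ∈ DzL (k 0) L := by exact_mod_cast hν
      have step1 : varExpr m L (fun s => a (Fin.cons ν s)) (fun j => k j.succ) (fun j => α j.succ)
          ≤ ∑ γ' : Fin m → Fin 3, lvarExpr m L (fun s => a (Fin.cons ν s))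
              (Kf L (fun j => k j.succ) (fun j => α j.succ) γ') (Af (fun j => α j.succ) γ') :=
        ih _ (hs_per ν) _ _
      have step2 : ∀ γ' : Fin m → Fin 3,
          lvarExpr m L (fun s => a (Fin.cons ν s))
              (Kf L (fun j => k j.succ) (fun j => α j.succ) γ') (Af (fun j => α j.succ) γ')
            ≤ lvarExpr (m+1) L a (Kf L k α (Fin.cons 0 γ')) (Af α (Fin.cons 0 γ')) := by
        intro γ'
        have hAf0 : (Af α (Fin.cons (0 : Fin 3) γ')) 0 = false := by simp [Af, hα]
        have hKf0 : (Kf L k α (Fin.cons (0 : Fin 3) γ')) 0 = k 0 := by simp [Kf]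
        rw [lvarExpr_succ_false a _ _ hAf0, hKf0, Af_tail, Kf_tail]
        exact le_csSup (((DzL (k 0) L).finite_toSet.image _).bddAbove) ⟨ν, hν, rfl⟩
      calc varExpr m L (fun s => a (Fin.cons ν s)) (fun j => k j.succ) (fun j => α j.succ)
          ≤ ∑ γ' : Fin m → Fin 3, lvarExpr m L (fun s => a (Fin.cons ν s))
              (Kf L (fun j => k j.succ) (fun j => α j.succ) γ') (Af (fun j => α j.succ) γ') :=
            step1
        _ ≤ ∑ γ' : Fin m → Fin 3,
              lvarExpr (m+1) L a (Kf L k α (Fin.cons 0 γ')) (Af α (Fin.cons 0 γ')) :=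
            Finset.sum_le_sum fun γ' _ => step2 γ'
        _ ≤ _ := by linarith [hRHS0 1, hRHS0 2]

end Aux

/-- **From local variations to total variations.**  If `lvar(a,k) ≤ M` for
every `k`, then `var(a) ≤ 4^d M`, i.e. every defining term of the total
variation is at most `4^d M`. -/
theorem var_le_of_lvar_le (d L : ℕ) (hL : 1 ≤ L)
    (a : (Fin d → ℤ) → ℂ)
    (hper : ∀ (k : Fin d → ℤ) (i : Fin d), a (k + (2*L) • Pi.single i 1) = a k)
    (M : ℝ) (hM : 0 < M)
    (hlvar : ∀ (k : Fin d → ℤ) (α : Fin d → Bool), lvarExpr d L a k α ≤ M) :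
    ∀ (k : Fin d → ℤ) (α : Fin d → Bool), varExpr d L a k α ≤ 4 ^ d * M := by
  intro k α
  have h1 := keyH L hL d a hper k α
  have h2 : ∑ γ : Fin d → Fin 3, lvarExpr d L a (Kf L k α γ) (Af α γ)
      ≤ ∑ _γ : Fin d → Fin 3, M := Finset.sum_le_sum fun γ _ => hlvar _ _
  have h3 : ∑ _γ : Fin d → Fin 3, (M:ℝ) = (3:ℝ)^d * M := by
    rw [Finset.sum_const, Finset.card_univ, Fintype.card_fun, Fintype.card_fin, Fintype.card_fin,
      nsmul_eq_mul]
    push_cast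
    ring
  have h4 : (3:ℝ)^d * M ≤ 4^d * M :=
    mul_le_mul_of_nonneg_right (pow_le_pow_left₀ (by norm_num) (by norm_num) d) hM.le
  linarith
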